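/- arXiv:1309.3115 — 3 statements merged into one kernel-verified Lean document; each statement's English description precedes it below -/
import Mathlib

section
/- Let s > 1/2, σ > 1/2, c ≠ 0, and T > 0. Then there exists a constant C, depending only on s, σ, and 1/|c| (and not on ρ or T), such that for all ρ > 0, ∫₀^T |(1+|·|²)^{-σ} (1+|· - (c/ρ) t|²)^{-σ}|_{H^s} dt ≤ C ρ. In particular the integral is uniformly bounded with respect to 1/ρ and T. -/
open MeasureTheory ENNReal
open Real FourierTransform Polynomial

/-- The `H^s(ℝ)` Sobolev norm of a complex-valued function, defined via the
Fourier transform: `‖f‖_{H^s} = ‖(1+ξ²)^{s/2} 𝓕f(ξ)‖_{L²}`. -/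
noncomputable def sobolevNorm (s : ℝ) (f : ℝ → ℂ) : ℝ≥0∞ :=
  eLpNorm (fun ξ : ℝ => ((1 + ξ ^ 2) ^ (s / 2) : ℝ) • FourierTransform.fourier f ξ) 2 volume

/-- The `H^s(ℝ)` Sobolev norm of a real-valued function. -/
noncomputable def sobolevNormR (s : ℝ) (f : ℝ → ℝ) : ℝ≥0∞ :=
  sobolevNorm s (fun x => (f x : ℂ))


-- from t1.lean

lemma one_add_sq_pos (x : ℝ) : (0:ℝ) < 1 + x ^ 2 := by positivity
lemma one_le_one_add_sq (x : ℝ) : (1:ℝ) ≤ 1 + x ^ 2 := by nlinarith [sq_nonneg x]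

lemma contDiff_w (τ : ℝ) : ContDiff ℝ ⊤ (fun x : ℝ => (1 + x ^ 2) ^ τ) := by
  apply ContDiff.rpow_const_of_ne
  · exact contDiff_const.add (contDiff_id.pow 2)
  · intro x; exact (one_add_sq_pos x).ne'

lemma struct (σ : ℝ) (n : ℕ) : ∃ p : Polynomial ℝ, p.natDegree ≤ n ∧
    ∀ x : ℝ, iteratedDeriv n (fun x : ℝ => (1 + x ^ 2) ^ (-σ)) x
      = p.eval x * (1 + x ^ 2) ^ (-σ - n) := by
  induction n with
  | zero => exact ⟨1, by simp, by simp⟩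
  | succ n ih =>
    obtain ⟨p, hdeg, hp⟩ := ih
    refine ⟨derivative p * (1 + X ^ 2) + Polynomial.C (2 * (-σ - n)) * (X * p), ?_, ?_⟩
    · apply le_trans (natDegree_add_le _ _)
      apply max_le
      · rcases Nat.eq_zero_or_pos p.natDegree with h0 | h0
        · rw [Polynomial.eq_C_of_natDegree_eq_zero h0]
          simp
        · apply le_trans (natDegree_mul_le)
          have h1 : (derivative p).natDegree ≤ n - 1 :=
            le_trans (natDegree_derivative_le p) (by omega)
          have h2 : ((1:ℝ[X]) + X ^ 2).natDegree ≤ 2 := by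
            apply le_trans (natDegree_add_le _ _); simp
          omega
      · apply le_trans natDegree_mul_le
        have h3 := natDegree_mul_le (p := (X:ℝ[X])) (q := p)
        simp only [natDegree_C, natDegree_X] at h3 ⊢
        omega
    · intro x
      rw [iteratedDeriv_succ, funext hp]
      have hb : HasDerivAt (fun x : ℝ => (1 + x ^ 2) ^ (-σ - n))
          ((-σ - n) * (1 + x ^ 2) ^ (-σ - n - 1) * (2 * x)) x := by
        have h1 : HasDerivAt (fun x : ℝ => 1 + x ^ 2) (2 * x) x := by
          simpa using ((hasDerivAt_pow 2 x).const_add 1)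
        exact (Real.hasDerivAt_rpow_const (p := -σ - n)
          (Or.inl (one_add_sq_pos x).ne')).comp x h1
      have hpe : HasDerivAt (fun x : ℝ => p.eval x) (p.derivative.eval x) x :=
        p.hasDerivAt x
      rw [HasDerivAt.deriv (f := fun x : ℝ => p.eval x * (1 + x ^ 2) ^ (-σ - n)) (hpe.mul hb)]
      have h1 : (1 + x ^ 2) ^ (-σ - (n:ℝ)) = (1 + x ^ 2) ^ (-σ - (n:ℝ) - 1) * (1 + x ^ 2) := by
        rw [← Real.rpow_add_one (one_add_sq_pos x).ne' (-σ - (n:ℝ) - 1)]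
        ring_nf
      have h2 : -σ - ((n:ℕ)+1:ℕ) = -σ - (n:ℝ) - 1 := by push_cast; ring
      rw [h1, h2]
      simp only [eval_add, eval_mul, eval_one, eval_pow, eval_X, eval_C, derivative_mul]
      ring
-- from t2.lean

lemma abs_pow_le (x : ℝ) (k n : ℕ) (hk : k ≤ n) :
    |x| ^ k ≤ (1 + x ^ 2) ^ ((n:ℝ)/2) := by
  have h1 : |x| ≤ (1 + x ^ 2) ^ ((1:ℝ)/2) := by
    rw [← Real.sqrt_eq_rpow]
    rw [← Real.sqrt_sq_eq_abs]
    exact Real.sqrt_le_sqrt (by nlinarith)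
  calc |x| ^ k ≤ ((1 + x ^ 2) ^ ((1:ℝ)/2)) ^ k :=
        pow_le_pow_left₀ (abs_nonneg x) h1 k
    _ = (1 + x ^ 2) ^ ((k:ℝ)/2) := by
        rw [← Real.rpow_natCast ((1 + x ^ 2) ^ ((1:ℝ)/2)) k,
          ← Real.rpow_mul (one_add_sq_pos x).le]
        ring_nf
    _ ≤ (1 + x ^ 2) ^ ((n:ℝ)/2) := by
        apply Real.rpow_le_rpow_of_exponent_le (one_le_one_add_sq x)
        have : (k:ℝ) ≤ n := Nat.cast_le.2 hk
        linarith

lemma deriv_bound (σ : ℝ) (n : ℕ) : ∃ C : ℝ, 0 ≤ C ∧ ∀ x : ℝ,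
    ‖iteratedDeriv n (fun x : ℝ => (1 + x ^ 2) ^ (-σ)) x‖ ≤ C * (1 + x ^ 2) ^ (-σ) := by
  obtain ⟨p, hdeg, hp⟩ := struct σ n
  refine ⟨∑ k ∈ Finset.range (n+1), |p.coeff k|, Finset.sum_nonneg fun _ _ => abs_nonneg _, ?_⟩
  intro x
  rw [hp x, Real.norm_eq_abs, abs_mul,
    abs_of_nonneg (Real.rpow_nonneg (one_add_sq_pos x).le _)]
  have heval : |p.eval x| ≤ (∑ k ∈ Finset.range (n+1), |p.coeff k|) * (1 + x^2) ^ ((n:ℝ)/2) := by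
    rw [Polynomial.eval_eq_sum_range' (Nat.lt_succ_of_le hdeg), Finset.sum_mul]
    refine le_trans (Finset.abs_sum_le_sum_abs _ _) (Finset.sum_le_sum fun k hk => ?_)
    rw [abs_mul, abs_pow]
    exact mul_le_mul_of_nonneg_left
      (abs_pow_le x k n (Nat.lt_succ_iff.1 (Finset.mem_range.1 hk))) (abs_nonneg _)
  calc |p.eval x| * (1 + x^2) ^ (-σ - (n:ℝ))
      ≤ ((∑ k ∈ Finset.range (n+1), |p.coeff k|) * (1 + x^2) ^ ((n:ℝ)/2))
        * (1 + x^2) ^ (-σ - (n:ℝ)) := by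
        exact mul_le_mul_of_nonneg_right heval (Real.rpow_nonneg (one_add_sq_pos x).le _)
    _ = (∑ k ∈ Finset.range (n+1), |p.coeff k|) * (1 + x^2) ^ ((n:ℝ)/2 + (-σ - n)) := by
        rw [mul_assoc, ← Real.rpow_add (one_add_sq_pos x)]
    _ ≤ (∑ k ∈ Finset.range (n+1), |p.coeff k|) * (1 + x^2) ^ (-σ) := by
        apply mul_le_mul_of_nonneg_left _ (Finset.sum_nonneg fun _ _ => abs_nonneg _)
        apply Real.rpow_le_rpow_of_exponent_le (one_le_one_add_sq x)
        have : (0:ℝ) ≤ n := Nat.cast_nonneg n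
        linarith
-- from t3.lean

lemma key_rpow (σ : ℝ) (hσ0 : 0 ≤ σ) (c : ℝ) (hc : 0 < c) {a b : ℝ} (ha : 0 < a)
    (hb : 0 < b) (h : b ≤ c * a) : a ^ (-σ) ≤ c ^ σ * b ^ (-σ) := by
  have ha' : (0:ℝ) < a ^ σ := Real.rpow_pos_of_pos ha σ
  have hb' : (0:ℝ) < b ^ σ := Real.rpow_pos_of_pos hb σ
  have h1 : b ^ σ ≤ c ^ σ * a ^ σ := by
    rw [← Real.mul_rpow hc.le ha.le]
    exact Real.rpow_le_rpow hb.le h hσ0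
  rw [Real.rpow_neg ha.le, Real.rpow_neg hb.le, ← div_eq_mul_inv, le_div_iff₀ hb',
    inv_mul_eq_div, div_le_iff₀ ha']
  exact h1

lemma sep (σ : ℝ) (hσ0 : 0 ≤ σ) (x y : ℝ) :
    (1 + x ^ 2) ^ (-σ) * (1 + (x - y) ^ 2) ^ (-σ)
      ≤ 4 ^ σ * (1 + y ^ 2) ^ (-σ) * ((1 + x ^ 2) ^ (-σ) + (1 + (x - y) ^ 2) ^ (-σ)) := by
  have hx := one_add_sq_pos x
  have hxy := one_add_sq_pos (x - y)
  have hy := one_add_sq_pos y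
  have hxn := Real.rpow_nonneg hx.le (-σ)
  have hxyn := Real.rpow_nonneg hxy.le (-σ)
  have hyn := Real.rpow_nonneg hy.le (-σ)
  have h4 : (0:ℝ) ≤ 4 ^ σ := Real.rpow_nonneg (by norm_num) σ
  by_cases h : y ^ 2 ≤ 4 * x ^ 2
  · have h1 : (1 + x ^ 2) ^ (-σ) ≤ 4 ^ σ * (1 + y ^ 2) ^ (-σ) :=
      key_rpow σ hσ0 4 (by norm_num) hx hy (by nlinarith)
    calc (1 + x ^ 2) ^ (-σ) * (1 + (x - y) ^ 2) ^ (-σ)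
        ≤ (4 ^ σ * (1 + y ^ 2) ^ (-σ)) * (1 + (x - y) ^ 2) ^ (-σ) :=
          mul_le_mul_of_nonneg_right h1 hxyn
      _ ≤ _ := by nlinarith [mul_nonneg (mul_nonneg h4 hyn) hxn]
  · have h1 : (1 + (x - y) ^ 2) ^ (-σ) ≤ 4 ^ σ * (1 + y ^ 2) ^ (-σ) :=
      key_rpow σ hσ0 4 (by norm_num) hxy hy
        (by nlinarith [sq_nonneg (2 * x - y), sq_nonneg (2 * x + y)])
    calc (1 + x ^ 2) ^ (-σ) * (1 + (x - y) ^ 2) ^ (-σ)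
        ≤ (1 + x ^ 2) ^ (-σ) * (4 ^ σ * (1 + y ^ 2) ^ (-σ)) :=
          mul_le_mul_of_nonneg_left h1 hxn
      _ ≤ _ := by nlinarith [mul_nonneg (mul_nonneg h4 hyn) hxyn]

lemma integrable_w {σ : ℝ} (hσ : 1 / 2 < σ) :
    Integrable (fun x : ℝ => (1 + x ^ 2) ^ (-σ)) := by
  have hint : Integrable (fun x : ℝ => (1 + ‖x‖) ^ (-(2 * σ))) := by
    apply integrable_one_add_norm (r := 2 * σ)
    rw [Module.finrank_self]
    push_cast; linarith
  apply (hint.const_mul (2 ^ σ)).mono'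
  · exact (contDiff_w (-σ)).continuous.aestronglyMeasurable
  · filter_upwards with x
    have h1 : (0:ℝ) < 1 + ‖x‖ := by positivity
    have h2 : ((1 + ‖x‖) ^ 2) ^ (-σ) = (1 + ‖x‖) ^ (-(2 * σ)) := by
      rw [← Real.rpow_natCast (1 + ‖x‖) 2, ← Real.rpow_mul h1.le]
      norm_num
    have h3 : (1 + x ^ 2) ^ (-σ) ≤ 2 ^ σ * ((1 + ‖x‖) ^ 2) ^ (-σ) := by
      apply key_rpow σ (by linarith) 2 (by norm_num) (one_add_sq_pos x) (by positivity)
      have : ‖x‖ ^ 2 = x ^ 2 := by simp [sq_abs, Real.norm_eq_abs]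
      nlinarith [abs_nonneg x, sq_nonneg (1 - |x|), sq_abs x]
    rw [Real.norm_eq_abs, abs_of_nonneg (Real.rpow_nonneg (one_add_sq_pos x).le _)]
    rw [h2] at h3
    exact h3
-- from t4.lean

noncomputable def FF (σ y : ℝ) : ℝ → ℂ :=
  fun x => (((1 + x ^ 2) ^ (-σ) * (1 + (x - y) ^ 2) ^ (-σ) : ℝ) : ℂ)

lemma FF_eq (σ y : ℝ) : FF σ y = fun x =>
    (((1 + x ^ 2) ^ (-σ) : ℝ) : ℂ) * (((1 + (x - y) ^ 2) ^ (-σ) : ℝ) : ℂ) := by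
  funext x; simp [FF]

lemma contDiff_w2 (σ y : ℝ) : ContDiff ℝ ⊤ (fun x : ℝ => (1 + (x - y) ^ 2) ^ (-σ)) :=
  (contDiff_w (-σ)).comp (contDiff_id.sub contDiff_const)

lemma contDiff_FF (σ y : ℝ) : ContDiff ℝ ⊤ (FF σ y) := by
  rw [FF_eq]
  exact (Complex.ofRealCLM.contDiff.comp (contDiff_w (-σ))).mul
    (Complex.ofRealCLM.contDiff.comp (contDiff_w2 σ y))

lemma iteratedDeriv_FF_bound (σ : ℝ) (m : ℕ) : ∃ D : ℝ, 0 ≤ D ∧ ∀ y x : ℝ,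
    ‖iteratedDeriv m (FF σ y) x‖
      ≤ D * ((1 + x ^ 2) ^ (-σ) * (1 + (x - y) ^ 2) ^ (-σ)) := by
  choose C hC0 hC using deriv_bound σ
  refine ⟨∑ i ∈ Finset.range (m+1), (m.choose i : ℝ) * C i * C (m - i),
    Finset.sum_nonneg fun i _ => by have := hC0 i; have := hC0 (m - i); positivity,
    fun y x => ?_⟩
  rw [← norm_iteratedFDeriv_eq_norm_iteratedDeriv, FF_eq]
  set g1 : ℝ → ℂ := fun x => (((1 + x ^ 2) ^ (-σ) : ℝ) : ℂ) with hg1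
  set g2 : ℝ → ℂ := fun x => (((1 + (x - y) ^ 2) ^ (-σ) : ℝ) : ℂ) with hg2
  have hcg1 : ContDiff ℝ (⊤ : WithTop ℕ∞) g1 :=
    Complex.ofRealCLM.contDiff.comp (contDiff_w (-σ))
  have hcg2 : ContDiff ℝ (⊤ : WithTop ℕ∞) g2 :=
    Complex.ofRealCLM.contDiff.comp (contDiff_w2 σ y)
  refine le_trans (norm_iteratedFDeriv_mul_le hcg1 hcg2 x le_top) ?_
  rw [Finset.sum_mul]
  apply Finset.sum_le_sum
  intro i hi
  have h1 : ‖iteratedFDeriv ℝ i g1 x‖ ≤ C i * (1 + x ^ 2) ^ (-σ) := by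
    have := Complex.ofRealLI.norm_iteratedFDeriv_comp_left ((contDiff_w (-σ)).contDiffAt (x := x))
      (le_top : (i : WithTop ℕ∞) ≤ ⊤)
    rw [show Complex.ofRealLI ∘ (fun x : ℝ => (1 + x ^ 2) ^ (-σ)) = g1 from rfl] at this
    rw [this, norm_iteratedFDeriv_eq_norm_iteratedDeriv]
    exact hC i x
  have h2 : ‖iteratedFDeriv ℝ (m - i) g2 x‖ ≤ C (m - i) * (1 + (x - y) ^ 2) ^ (-σ) := by
    have := Complex.ofRealLI.norm_iteratedFDeriv_comp_left ((contDiff_w2 σ y).contDiffAt (x := x))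
      (le_top : ((m - i : ℕ) : WithTop ℕ∞) ≤ ⊤)
    rw [show Complex.ofRealLI ∘ (fun x : ℝ => (1 + (x - y) ^ 2) ^ (-σ)) = g2 from rfl] at this
    rw [this, norm_iteratedFDeriv_eq_norm_iteratedDeriv]
    have hshift : iteratedDeriv (m - i) (fun x : ℝ => (1 + (x - y) ^ 2) ^ (-σ)) x
        = iteratedDeriv (m - i) (fun x : ℝ => (1 + x ^ 2) ^ (-σ)) (x - y) := by
      have h := congrFun
        (iteratedDeriv_comp_add_const (m - i) (fun u : ℝ => (1 + u ^ 2) ^ (-σ)) (-y)) x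
      simpa [sub_eq_add_neg] using h
    rw [hshift]
    exact hC (m - i) (x - y)
  calc (m.choose i : ℝ) * ‖iteratedFDeriv ℝ i g1 x‖ * ‖iteratedFDeriv ℝ (m - i) g2 x‖
      ≤ (m.choose i : ℝ) * (C i * (1 + x ^ 2) ^ (-σ)) * (C (m - i) * (1 + (x - y) ^ 2) ^ (-σ)) := by
        apply mul_le_mul (mul_le_mul_of_nonneg_left h1 (by positivity)) h2 (norm_nonneg _)
        have h3 := Real.rpow_nonneg (one_add_sq_pos x).le (-σ)
        have h4 := hC0 i
        positivity
    _ = (m.choose i : ℝ) * C i * C (m - i) * ((1 + x ^ 2) ^ (-σ) * (1 + (x - y) ^ 2) ^ (-σ)) := by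
        ring
-- from t5.lean


lemma w_nonneg (σ x : ℝ) : (0:ℝ) ≤ (1 + x ^ 2) ^ (-σ) :=
  Real.rpow_nonneg (one_add_sq_pos x).le _

lemma w_le_one {σ : ℝ} (hσ0 : 0 ≤ σ) (x : ℝ) : (1 + x ^ 2) ^ (-σ) ≤ 1 :=
  Real.rpow_le_one_of_one_le_of_nonpos (one_le_one_add_sq x) (neg_nonpos.2 hσ0)

lemma integrable_wy {σ : ℝ} (hσ : 1 / 2 < σ) (y : ℝ) :
    Integrable (fun x : ℝ => (1 + (x - y) ^ 2) ^ (-σ)) :=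
  (integrable_w hσ).comp_sub_right y

lemma integrable_prod {σ : ℝ} (hσ : 1 / 2 < σ) (y : ℝ) :
    Integrable (fun x : ℝ => (1 + x ^ 2) ^ (-σ) * (1 + (x - y) ^ 2) ^ (-σ)) := by
  apply (integrable_w hσ).mono'
  · exact ((contDiff_w (-σ)).continuous.aestronglyMeasurable.mul
      (((contDiff_w (-σ)).comp (contDiff_id.sub contDiff_const)).continuous.aestronglyMeasurable))
  · filter_upwards with x
    rw [Real.norm_eq_abs, abs_of_nonneg (mul_nonneg (w_nonneg σ x) (w_nonneg σ (x - y)))]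
    calc (1 + x ^ 2) ^ (-σ) * (1 + (x - y) ^ 2) ^ (-σ)
        ≤ (1 + x ^ 2) ^ (-σ) * 1 :=
          mul_le_mul_of_nonneg_left (w_le_one (by linarith) (x - y)) (w_nonneg σ x)
      _ = (1 + x ^ 2) ^ (-σ) := mul_one _

lemma conv_bound {σ : ℝ} (hσ : 1 / 2 < σ) (y : ℝ) :
    ∫ x : ℝ, (1 + x ^ 2) ^ (-σ) * (1 + (x - y) ^ 2) ^ (-σ)
      ≤ 4 ^ σ * (2 * ∫ x : ℝ, (1 + x ^ 2) ^ (-σ)) * (1 + y ^ 2) ^ (-σ) := by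
  have hσ0 : (0:ℝ) ≤ σ := by linarith
  have h1 : Integrable (fun x : ℝ =>
      4 ^ σ * (1 + y ^ 2) ^ (-σ) * ((1 + x ^ 2) ^ (-σ) + (1 + (x - y) ^ 2) ^ (-σ))) :=
    (((integrable_w hσ).add (integrable_wy hσ y)).const_mul _)
  have h2 := integral_mono (integrable_prod hσ y) h1 (fun x => sep σ hσ0 x y)
  rw [integral_const_mul, integral_add (integrable_w hσ) (integrable_wy hσ y)] at h2
  have h3 : ∫ x : ℝ, (1 + (x - y) ^ 2) ^ (-σ) = ∫ x : ℝ, (1 + x ^ 2) ^ (-σ) :=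
    integral_sub_right_eq_self (fun x : ℝ => (1 + x ^ 2) ^ (-σ)) y
  rw [h3] at h2
  calc ∫ x : ℝ, (1 + x ^ 2) ^ (-σ) * (1 + (x - y) ^ 2) ^ (-σ) ≤ _ := h2
    _ = 4 ^ σ * (2 * ∫ x : ℝ, (1 + x ^ 2) ^ (-σ)) * (1 + y ^ 2) ^ (-σ) := by ring

lemma FF_L1 {σ : ℝ} (hσ : 1 / 2 < σ) (m : ℕ) : ∃ A : ℝ, 0 ≤ A ∧ ∀ y : ℝ,
    Integrable (iteratedDeriv m (FF σ y)) ∧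
    ∫ x : ℝ, ‖iteratedDeriv m (FF σ y) x‖ ≤ A * (1 + y ^ 2) ^ (-σ) := by
  have hσ0 : (0:ℝ) ≤ σ := by linarith
  obtain ⟨D, hD0, hD⟩ := iteratedDeriv_FF_bound σ m
  have hI0 : (0:ℝ) ≤ ∫ x : ℝ, (1 + x ^ 2) ^ (-σ) :=
    integral_nonneg (fun x => w_nonneg σ x)
  refine ⟨D * (4 ^ σ * (2 * ∫ x : ℝ, (1 + x ^ 2) ^ (-σ))), by positivity, fun y => ?_⟩
  have hint : Integrable (iteratedDeriv m (FF σ y)) := by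
    apply ((integrable_prod hσ y).const_mul D).mono'
    · exact ((contDiff_FF σ y).continuous_iteratedDeriv m le_top).aestronglyMeasurable
    · filter_upwards with x
      exact hD y x
  refine ⟨hint, ?_⟩
  calc ∫ x : ℝ, ‖iteratedDeriv m (FF σ y) x‖
      ≤ ∫ x : ℝ, D * ((1 + x ^ 2) ^ (-σ) * (1 + (x - y) ^ 2) ^ (-σ)) :=
        integral_mono hint.norm ((integrable_prod hσ y).const_mul D) (fun x => hD y x)
    _ = D * ∫ x : ℝ, (1 + x ^ 2) ^ (-σ) * (1 + (x - y) ^ 2) ^ (-σ) := integral_const_mul _ _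
    _ ≤ D * (4 ^ σ * (2 * ∫ x : ℝ, (1 + x ^ 2) ^ (-σ)) * (1 + y ^ 2) ^ (-σ)) :=
        mul_le_mul_of_nonneg_left (conv_bound hσ y) hD0
    _ = D * (4 ^ σ * (2 * ∫ x : ℝ, (1 + x ^ 2) ^ (-σ))) * (1 + y ^ 2) ^ (-σ) := by ring
-- from t6.lean



lemma fourier_bound {σ : ℝ} (hσ : 1 / 2 < σ) (N : ℕ) : ∃ K : ℝ, 0 ≤ K ∧ ∀ y ξ : ℝ,
    (1 + ξ ^ 2) ^ N * ‖FourierTransform.fourier (FF σ y) ξ‖ ≤ K * (1 + y ^ 2) ^ (-σ) := by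
  choose A hA using fun m => FF_L1 hσ m
  obtain hA0 : ∀ m, 0 ≤ A m := fun m => (hA m).1
  refine ⟨∑ k ∈ Finset.range (N+1), (N.choose k : ℝ) * A (2*k),
    Finset.sum_nonneg fun k _ => by have := hA0 (2*k); positivity, fun y ξ => ?_⟩
  have hkey : ∀ k : ℕ, ξ ^ (2*k) * ‖FourierTransform.fourier (FF σ y) ξ‖
      ≤ A (2*k) * (1 + y ^ 2) ^ (-σ) := by
    intro k
    have hF := Real.fourier_iteratedDeriv (N := (⊤:ℕ∞)) (n := 2*k)
      ((contDiff_FF σ y).of_le le_top)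
      (fun n _ => (((hA n).2) y).1) le_top
    have h1 : ‖FourierTransform.fourier (iteratedDeriv (2*k) (FF σ y)) ξ‖
        ≤ ∫ x : ℝ, ‖iteratedDeriv (2*k) (FF σ y) x‖ :=
      by rw [Real.fourier_real_eq]; exact (norm_integral_le_integral_norm _).trans_eq (by simp_rw [Circle.norm_smul])
    rw [congrFun hF ξ] at h1
    have h2 : ‖((2 * π * Complex.I * ξ) ^ (2*k)) • FourierTransform.fourier (FF σ y) ξ‖
        = (2*π*|ξ|) ^ (2*k) * ‖FourierTransform.fourier (FF σ y) ξ‖ := by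
      rw [norm_smul, norm_pow]
      congr 2
      simp [Complex.norm_real, abs_of_pos Real.pi_pos]
    have h3 : ξ ^ (2*k) ≤ (2*π*|ξ|) ^ (2*k) := by
      rw [pow_mul, pow_mul]
      apply pow_le_pow_left₀ (sq_nonneg ξ)
      have hpi : (1:ℝ) ≤ 2*π := by nlinarith [Real.pi_gt_three]
      have h4 : (0:ℝ) ≤ ((2*π)^2 - 1) * |ξ|^2 := mul_nonneg (by nlinarith) (sq_nonneg _)
      nlinarith [sq_abs ξ]
    calc ξ ^ (2*k) * ‖FourierTransform.fourier (FF σ y) ξ‖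
        ≤ (2*π*|ξ|) ^ (2*k) * ‖FourierTransform.fourier (FF σ y) ξ‖ :=
          mul_le_mul_of_nonneg_right h3 (norm_nonneg _)
      _ = ‖((2 * π * Complex.I * ξ) ^ (2*k)) • FourierTransform.fourier (FF σ y) ξ‖ := h2.symm
      _ ≤ ∫ x : ℝ, ‖iteratedDeriv (2*k) (FF σ y) x‖ := h1
      _ ≤ A (2*k) * (1 + y ^ 2) ^ (-σ) := (((hA (2*k)).2) y).2
  have hexp : (1 + ξ ^ 2) ^ N * ‖FourierTransform.fourier (FF σ y) ξ‖
      = ∑ k ∈ Finset.range (N+1),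
        (N.choose k : ℝ) * (ξ ^ (2*k) * ‖FourierTransform.fourier (FF σ y) ξ‖) := by
    rw [show (1 + ξ^2 : ℝ) = ξ^2 + 1 by ring, add_pow, Finset.sum_mul]
    apply Finset.sum_congr rfl
    intro k _
    rw [one_pow, pow_mul]
    ring
  rw [hexp, Finset.sum_mul]
  apply Finset.sum_le_sum
  intro k hk
  rw [mul_assoc]
  exact mul_le_mul_of_nonneg_left (hkey k) (Nat.cast_nonneg _)

lemma sobolev_bound {σ s : ℝ} (hσ : 1 / 2 < σ) (hs : 1 / 2 < s) : ∃ M : ℝ, 0 ≤ M ∧ ∀ y : ℝ,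
    (sobolevNorm s (FF σ y)).toReal ≤ M * (1 + y ^ 2) ^ (-σ) := by
  set N : ℕ := ⌈s/2⌉₊ + 1 with hN
  have hsN : s/2 - N ≤ -1 := by
    have := Nat.le_ceil (s/2)
    push_cast [hN]
    push_cast at this
    linarith
  obtain ⟨K, hK0, hK⟩ := fourier_bound hσ N
  set g₀ : ℝ → ℝ := fun ξ => (1 + ξ ^ 2) ^ (-(1:ℝ)) with hg₀
  have hg₀m : MemLp g₀ 2 volume := by
    rw [memLp_two_iff_integrable_sq (contDiff_w (-(1:ℝ))).continuous.aestronglyMeasurable]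
    have : (fun x : ℝ => g₀ x ^ 2) = fun x : ℝ => (1 + x ^ 2) ^ (-(2:ℝ)) := by
      funext x
      rw [hg₀, ← Real.rpow_natCast ((1 + x ^ 2) ^ (-(1:ℝ))) 2, ← Real.rpow_mul (one_add_sq_pos x).le]
      norm_num
    rw [this]
    exact integrable_w (by norm_num)
  have hE : eLpNorm g₀ 2 volume ≠ ⊤ := hg₀m.eLpNorm_ne_top
  refine ⟨K * (eLpNorm g₀ 2 volume).toReal, by positivity, fun y => ?_⟩
  have hpt : ∀ ξ : ℝ, ‖((1 + ξ ^ 2) ^ (s / 2) : ℝ) • FourierTransform.fourier (FF σ y) ξ‖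
      ≤ ‖((K * (1 + y ^ 2) ^ (-σ)) • g₀) ξ‖ := by
    intro ξ
    rw [norm_smul, Real.norm_eq_abs, abs_of_nonneg (Real.rpow_nonneg (one_add_sq_pos ξ).le _)]
    have h1 : (1 + ξ ^ 2) ^ (s/2) = (1 + ξ ^ 2) ^ (s/2 - N) * (1 + ξ ^ 2) ^ N := by
      rw [← Real.rpow_natCast (1 + ξ^2) N, ← Real.rpow_add (one_add_sq_pos ξ)]
      ring_nf
    have h2 : (1 + ξ ^ 2) ^ (s/2 - N) ≤ (1 + ξ ^ 2) ^ (-(1:ℝ)) :=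
      Real.rpow_le_rpow_of_exponent_le (one_le_one_add_sq ξ) hsN
    have h3 : (0:ℝ) ≤ (1 + ξ ^ 2) ^ N := pow_nonneg (one_add_sq_pos ξ).le N
    calc (1 + ξ ^ 2) ^ (s/2) * ‖FourierTransform.fourier (FF σ y) ξ‖
        = (1 + ξ ^ 2) ^ (s/2 - N) * ((1 + ξ ^ 2) ^ N * ‖FourierTransform.fourier (FF σ y) ξ‖) := by
          rw [h1]; ring
      _ ≤ (1 + ξ ^ 2) ^ (-(1:ℝ)) * (K * (1 + y ^ 2) ^ (-σ)) := by
          apply mul_le_mul h2 (hK y ξ) (by positivity) (Real.rpow_nonneg (one_add_sq_pos ξ).le _)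
      _ = ‖((K * (1 + y ^ 2) ^ (-σ)) • g₀) ξ‖ := by
          simp only [Pi.smul_apply, smul_eq_mul, Real.norm_eq_abs, hg₀]
          rw [abs_of_nonneg (mul_nonneg (mul_nonneg hK0 (w_nonneg σ y)) (w_nonneg 1 ξ))]
          ring
  have hc0 : (0:ℝ) ≤ K * (1 + y ^ 2) ^ (-σ) := mul_nonneg hK0 (w_nonneg σ y)
  calc (sobolevNorm s (FF σ y)).toReal
      ≤ ((‖K * (1 + y ^ 2) ^ (-σ)‖₊ : ℝ≥0∞) * eLpNorm g₀ 2 volume).toReal := by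
        apply ENNReal.toReal_mono (ENNReal.mul_ne_top ENNReal.coe_ne_top hE)
        rw [sobolevNorm]
        refine (eLpNorm_mono hpt).trans_eq ?_
        rw [eLpNorm_const_smul, enorm_eq_nnnorm]
    _ = K * (eLpNorm g₀ 2 volume).toReal * (1 + y ^ 2) ^ (-σ) := by
        rw [ENNReal.toReal_mul, ENNReal.coe_toReal, coe_nnnorm, Real.norm_eq_abs,
          abs_of_nonneg hc0]
        ring
-- from t7.lean




/-- Separation of fast and slow modes: for `s > 1/2`, `σ > 1/2`, `c ≠ 0` there is a
constant `C = C(s, σ, 1/|c|)`, independent of `ρ` and `T`, such that for all `ρ > 0`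
and `T > 0`,
`∫₀^T |(1+|·|²)^{-σ} (1+|· - (c/ρ)t|²)^{-σ}|_{H^s} dt ≤ C ρ`. -/
theorem interaction_integral_estimate (s σ c : ℝ) (hs : 1 / 2 < s) (hσ : 1 / 2 < σ)
    (hc : c ≠ 0) :
    ∃ C : ℝ, 0 < C ∧
      ∀ ρ T : ℝ, 0 < ρ → 0 < T →
        ∫ t in Set.Ioc (0 : ℝ) T,
            (sobolevNormR s (fun x =>
              (1 + x ^ 2) ^ (-σ) * (1 + (x - (c / ρ) * t) ^ 2) ^ (-σ))).toReal
          ≤ C * ρ := by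
  obtain ⟨M, hM0, hM⟩ := sobolev_bound hσ hs
  have hI0 : (0:ℝ) ≤ ∫ u : ℝ, (1 + u ^ 2) ^ (-σ) := integral_nonneg (fun u => w_nonneg σ u)
  set I : ℝ := ∫ u : ℝ, (1 + u ^ 2) ^ (-σ) with hI
  have hcabs : (0:ℝ) < |c| := abs_pos.2 hc
  refine ⟨M * I / |c| + 1, by positivity, fun ρ T hρ hT => ?_⟩
  set a : ℝ := c / ρ with ha
  have hane : a ≠ 0 := div_ne_zero hc hρ.ne'
  have hwa : Integrable (fun t : ℝ => (1 + (a * t) ^ 2) ^ (-σ)) :=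
    (integrable_w hσ).comp_mul_left' hane
  have hint : Integrable (fun t : ℝ => M * (1 + (a * t) ^ 2) ^ (-σ)) := hwa.const_mul M
  have hptwise : ∀ t : ℝ,
      (sobolevNormR s (fun x =>
        (1 + x ^ 2) ^ (-σ) * (1 + (x - a * t) ^ 2) ^ (-σ))).toReal
        ≤ M * (1 + (a * t) ^ 2) ^ (-σ) := by
    intro t
    have : sobolevNormR s (fun x =>
        (1 + x ^ 2) ^ (-σ) * (1 + (x - a * t) ^ 2) ^ (-σ)) = sobolevNorm s (FF σ (a * t)) := rfl
    rw [this]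
    exact hM (a * t)
  calc ∫ t in Set.Ioc (0:ℝ) T,
        (sobolevNormR s (fun x =>
          (1 + x ^ 2) ^ (-σ) * (1 + (x - a * t) ^ 2) ^ (-σ))).toReal
      ≤ ∫ t in Set.Ioc (0:ℝ) T, M * (1 + (a * t) ^ 2) ^ (-σ) := by
        apply integral_mono_of_nonneg
        · exact Filter.Eventually.of_forall (fun t => ENNReal.toReal_nonneg)
        · exact hint.integrableOn
        · exact Filter.Eventually.of_forall hptwise
    _ ≤ ∫ t : ℝ, M * (1 + (a * t) ^ 2) ^ (-σ) := by
        apply setIntegral_le_integral hint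
        exact Filter.Eventually.of_forall (fun t => mul_nonneg hM0 (w_nonneg σ (a * t)))
    _ = M * ∫ t : ℝ, (1 + (a * t) ^ 2) ^ (-σ) := integral_const_mul _ _
    _ = M * (|a⁻¹| * I) := by
        rw [Measure.integral_comp_mul_left (fun u : ℝ => (1 + u ^ 2) ^ (-σ)) a]
        simp [smul_eq_mul, hI]
    _ ≤ (M * I / |c| + 1) * ρ := by
        have h1 : |a⁻¹| = ρ / |c| := by
          rw [ha, ← one_div, one_div_div, abs_div, abs_of_pos hρ]
        rw [h1]
        have h2 : M * (ρ / |c| * I) = M * I / |c| * ρ := by field_simp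
        rw [h2]
        nlinarith
end

section
/- Let 0 < γ < 1 and δ > 0, and set ρ = √((1-γ)/(γ+δ)). Consider the 4×4 matrix L_ρ with rows: (0, 0, (γ-1)/(γ(δ+1)), (γ+δ)/(γ(δ+1))); (0, 0, ρ/(1+δ), ρ/(1+δ)); (0, ρ(γ+δ), 0, 0); (γ(1+δ^{-1}), ρ(δ+γ)/δ, 0, 0). Then for ρ sufficiently small (equivalently γ close to 1), L_ρ has four distinct real eigenvalues λ satisfying λ^f_± = ±√(1+δ^{-1}) + O(ρ²) and λ^s_± = ±ρ + O(ρ³). -/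
open Matrix

set_option maxHeartbeats 1000000 in
lemma my_det_fin_four (a b c d e f g h i j k l m n o p : ℝ) :
    (!![a,b,c,d; e,f,g,h; i,j,k,l; m,n,o,p] : Matrix (Fin 4) (Fin 4) ℝ).det
    = a*(f*(k*p - l*o) - g*(j*p - l*n) + h*(j*o - k*n))
      - b*(e*(k*p - l*o) - g*(i*p - l*m) + h*(i*o - k*m))
      + c*(e*(j*p - l*n) - f*(i*p - l*m) + h*(i*n - j*m))
      - d*(e*(j*o - k*n) - f*(i*o - k*m) + g*(i*n - j*m)) := by
  simp [Matrix.det_succ_row_zero, Fin.sum_univ_succ,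
    show (Fin.succAbove 2 2 : Fin 4) = 3 from rfl,
    show (Fin.succAbove 1 2 : Fin 4) = 3 from rfl,
    show (Fin.castSucc 2 : Fin 4) = 2 from rfl,
    show (Fin.succAbove 3 2 : Fin 4) = 2 from rfl]
  ring

lemma det_L_sub (γ ρ δ l : ℝ) (hγ : γ ≠ 0) (hδ : δ ≠ 0) (h1δ : (1:ℝ)+δ ≠ 0) :
    δ * ((!![0, 0, (γ - 1) / (γ * (δ + 1)), (γ + δ) / (γ * (δ + 1));
        0, 0, ρ / (1 + δ), ρ / (1 + δ);
        0, ρ * (γ + δ), 0, 0;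
        γ * (1 + δ⁻¹), ρ * (δ + γ) / δ, 0, 0] : Matrix (Fin 4) (Fin 4) ℝ)
      - l • 1).det
    = δ*l^4 - (γ+δ)*(1+ρ^2) * l^2 + ρ^2*(γ+δ) := by
  have hδ1 : δ + 1 ≠ 0 := fun h => h1δ (by linarith)
  have hm : ((!![0, 0, (γ - 1) / (γ * (δ + 1)), (γ + δ) / (γ * (δ + 1));
        0, 0, ρ / (1 + δ), ρ / (1 + δ);
        0, ρ * (γ + δ), 0, 0;
        γ * (1 + δ⁻¹), ρ * (δ + γ) / δ, 0, 0] : Matrix (Fin 4) (Fin 4) ℝ)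
      - l • 1)
      = !![-l, 0, (γ - 1) / (γ * (δ + 1)), (γ + δ) / (γ * (δ + 1));
        0, -l, ρ / (1 + δ), ρ / (1 + δ);
        0, ρ * (γ + δ), -l, 0;
        γ * (1 + δ⁻¹), ρ * (δ + γ) / δ, 0, -l] := by
    ext i j
    fin_cases i <;> fin_cases j <;>
      simp [Matrix.sub_apply, Matrix.smul_apply, Matrix.one_apply, Matrix.vecHead,
        Matrix.vecTail]
  rw [hm, my_det_fin_four]
  field_simp
  ring

lemma abs_sqrt_sub_sqrt {x y : ℝ} (hx : 0 ≤ x) (hy : 0 < y) :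
    |Real.sqrt x - Real.sqrt y| ≤ |x - y| / Real.sqrt y := by
  have hsy : 0 < Real.sqrt y := Real.sqrt_pos.mpr hy
  rw [le_div_iff₀ hsy]
  have h4 : |Real.sqrt x - Real.sqrt y| * (Real.sqrt x + Real.sqrt y) = |x - y| := by
    rw [← abs_of_nonneg (show (0:ℝ) ≤ Real.sqrt x + Real.sqrt y by positivity), ← abs_mul]
    congr 1
    linear_combination Real.sq_sqrt hx - Real.sq_sqrt hy.le
  nlinarith [abs_nonneg (Real.sqrt x - Real.sqrt y), Real.sqrt_nonneg x, h4]

set_option maxHeartbeats 2000000 in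
/-- Eigenvalue asymptotics for the linear operator `L_ρ` of the free-surface two-layer
shallow-water system: for `ρ = √((1-γ)/(γ+δ))` sufficiently small, `L_ρ` has four
distinct real eigenvalues `λ^f_± = ±√(1+δ⁻¹) + O(ρ²)` and `λ^s_± = ±ρ + O(ρ³)`. -/
theorem L_rho_eigenvalues (δ : ℝ) (hδ : 0 < δ) :
    ∃ ρ₀ C : ℝ, 0 < ρ₀ ∧ 0 < C ∧
      ∀ γ ρ : ℝ, 0 < γ → γ < 1 → ρ = Real.sqrt ((1 - γ) / (γ + δ)) → ρ < ρ₀ →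
        ∀ L : Matrix (Fin 4) (Fin 4) ℝ,
          L = !![0, 0, (γ - 1) / (γ * (δ + 1)), (γ + δ) / (γ * (δ + 1));
                 0, 0, ρ / (1 + δ), ρ / (1 + δ);
                 0, ρ * (γ + δ), 0, 0;
                 γ * (1 + δ⁻¹), ρ * (δ + γ) / δ, 0, 0] →
          ∃ lfP lfM lsP lsM : ℝ,
            (lfP ≠ lfM ∧ lfP ≠ lsP ∧ lfP ≠ lsM ∧ lfM ≠ lsP ∧ lfM ≠ lsM ∧ lsP ≠ lsM) ∧
            (∀ l ∈ [lfP, lfM, lsP, lsM], ∃ v : Fin 4 → ℝ, v ≠ 0 ∧ L.mulVec v = l • v) ∧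
            |lfP - Real.sqrt (1 + δ⁻¹)| ≤ C * ρ ^ 2 ∧
            |lfM + Real.sqrt (1 + δ⁻¹)| ≤ C * ρ ^ 2 ∧
            |lsP - ρ| ≤ C * ρ ^ 3 ∧
            |lsM + ρ| ≤ C * ρ ^ 3 := by
  have hB0 : (0:ℝ) < (1+δ)/δ := by positivity
  refine ⟨Real.sqrt ((1+δ)/δ)/2, 2/Real.sqrt ((1+δ)/δ) + 2 + 4*δ, ?_, ?_, ?_⟩
  · have := Real.sqrt_pos.mpr hB0; linarith
  · have := Real.sqrt_pos.mpr hB0; positivity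
  intro γ ρ hγ0 hγ1 hρ hρlt L hL
  set B : ℝ := (1+δ)/δ with hBdef
  have hB : 0 < B := hB0
  have hsB : 0 < Real.sqrt B := Real.sqrt_pos.mpr hB
  have hbinv : (1:ℝ) + δ⁻¹ = B := by rw [hBdef]; field_simp; ring
  have hBδ : B * δ = 1 + δ := by rw [hBdef]; field_simp
  have hγδ : (0:ℝ) < γ + δ := by linarith
  have hfrac : (0:ℝ) < (1-γ)/(γ+δ) := div_pos (by linarith) hγδ
  have hρpos : 0 < ρ := hρ ▸ Real.sqrt_pos.mpr hfrac
  have hρ2 : ρ^2 = (1-γ)/(γ+δ) := by rw [hρ]; exact Real.sq_sqrt hfrac.le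
  have h1 : ρ^2*(γ+δ) = 1-γ := by rw [hρ2]; field_simp
  have hρ2lt : ρ^2 < B/4 := by
    nlinarith [Real.sq_sqrt hB.le, mul_self_lt_mul_self hρpos.le hρlt]
  set c : ℝ := (1-γ)/δ with hcdef
  have hcδ : c * δ = 1 - γ := by rw [hcdef]; field_simp
  have hc_pos : 0 < c := div_pos (by linarith) hδ
  have hc_le : c ≤ ρ^2*B := by nlinarith [hcδ, hBδ, h1, sq_nonneg ρ]
  have hD : 0 < B^2 - 4*c := by
    nlinarith [hc_le, mul_lt_mul_of_pos_right hρ2lt hB]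
  set sD : ℝ := Real.sqrt (B^2 - 4*c) with hsDdef
  have hsD2 : sD^2 = B^2 - 4*c := Real.sq_sqrt hD.le
  have hsDpos : 0 < sD := Real.sqrt_pos.mpr hD
  have hsDlt : sD < B := by nlinarith [hsD2, hc_pos, hsDpos.le, hB]
  set μp : ℝ := (B + sD)/2 with hμpdef
  set μm : ℝ := (B - sD)/2 with hμmdef
  have hμp_pos : 0 < μp := by rw [hμpdef]; linarith
  have hμm_pos : 0 < μm := by rw [hμmdef]; linarith
  have hμm_lt_μp : μm < μp := by rw [hμpdef, hμmdef]; linarith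
  have hμp_ge : B/2 ≤ μp := by rw [hμpdef]; linarith
  have hroot2_p : μp^2 - B*μp + c = 0 := by rw [hμpdef]; linear_combination (1/4)*hsD2
  have hroot2_m : μm^2 - B*μm + c = 0 := by rw [hμmdef]; linear_combination (1/4)*hsD2
  have hμmμp : μm*μp = c := by rw [hμpdef, hμmdef]; linear_combination (-(1/4))*hsD2
  have hμm_le : μm ≤ 2*ρ^2 := by
    nlinarith [hμmμp, hc_le, hμp_ge, hμm_pos.le, hB]
  have hrootδ_p : δ*μp^2 - (1+δ)*μp + (1-γ) = 0 := by
    linear_combination δ*hroot2_p + μp*hBδ - hcδ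
  have hrootδ_m : δ*μm^2 - (1+δ)*μm + (1-γ) = 0 := by
    linear_combination δ*hroot2_m + μm*hBδ - hcδ
  -- eigenvector machinery
  have key : ∀ μ lam : ℝ, lam^2 = μ → δ*μ^2 - (1+δ)*μ + (1-γ) = 0 →
      ∃ v : Fin 4 → ℝ, v ≠ 0 ∧ L.mulVec v = lam • v := by
    intro μ lam hlμ hroot
    have hdetδ : δ * (L - lam • 1).det = 0 := by
      rw [hL, det_L_sub γ ρ δ lam hγ0.ne' hδ.ne' (by linarith)]
      linear_combination hroot + (1-μ)*h1 + (δ*(lam^2+μ) - (γ+δ)*(1+ρ^2))*hlμ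
    have hdet : (L - lam • 1).det = 0 := by
      rcases mul_eq_zero.mp hdetδ with h | h
      · exact absurd h hδ.ne'
      · exact h
    obtain ⟨v, hv0, hv⟩ := (Matrix.exists_mulVec_eq_zero_iff).mpr hdet
    refine ⟨v, hv0, ?_⟩
    have h2 : L.mulVec v - lam • v = 0 := by
      calc L.mulVec v - lam • v = (L - lam • 1).mulVec v := by
            rw [Matrix.sub_mulVec, Matrix.smul_mulVec, Matrix.one_mulVec]
        _ = 0 := hv
    exact sub_eq_zero.mp h2
  set lf : ℝ := Real.sqrt μp with hlf
  set ls : ℝ := Real.sqrt μm with hls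
  have hlf_pos : 0 < lf := Real.sqrt_pos.mpr hμp_pos
  have hls_pos : 0 < ls := Real.sqrt_pos.mpr hμm_pos
  have hlf2 : lf^2 = μp := Real.sq_sqrt hμp_pos.le
  have hls2 : ls^2 = μm := Real.sq_sqrt hμm_pos.le
  have hlslf : ls < lf := Real.sqrt_lt_sqrt hμm_pos.le hμm_lt_μp
  have h1ρ : (0:ℝ) < 1+ρ^2 := by positivity
  have hρ4 : (0:ℝ) ≤ ρ^4 := by positivity
  have h2B : (0:ℝ) < 2/Real.sqrt B := div_pos (by norm_num) hsB
  -- fast eigenvalue bound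
  have efast : |lf - Real.sqrt B| ≤ 2/Real.sqrt B * ρ^2 := by
    have e1 := abs_sqrt_sub_sqrt hμp_pos.le hB
    rw [← hlf] at e1
    have e2 : |μp - B| = μm := by
      rw [abs_of_nonpos (by rw [hμpdef]; linarith), hμpdef, hμmdef]; ring
    calc |lf - Real.sqrt B| ≤ |μp - B|/Real.sqrt B := e1
      _ = μm/Real.sqrt B := by rw [e2]
      _ ≤ (2*ρ^2)/Real.sqrt B := (div_le_div_iff_of_pos_right hsB).mpr hμm_le
      _ = 2/Real.sqrt B * ρ^2 := by ring
  have efast' : |lf - Real.sqrt B| ≤ (2/Real.sqrt B + 2 + 4*δ) * ρ^2 := by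
    refine efast.trans (mul_le_mul_of_nonneg_right ?_ (sq_nonneg ρ))
    linarith
  -- slow eigenvalue bound
  have hslow : |ls - ρ| ≤ (1+4*δ)*ρ^3 := by
    have hc' : c*(1+ρ^2) = ρ^2*B := by
      apply mul_left_cancel₀ hδ.ne'
      linear_combination (1+ρ^2)*hcδ - ρ^2*hBδ - h1
    have key_eq : B*(1+ρ^2)*(μm - ρ^2) = (1+ρ^2)*μm^2 - B*ρ^4 := by
      linear_combination (-(1+ρ^2))*hroot2_m + hc'
    have hBρ : 0 < B*(1+ρ^2) := mul_pos hB h1ρ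
    have hμm2 : μm^2 ≤ 4*ρ^4 := by calc μm^2 = μm*μm := by ring
      _ ≤ (2*ρ^2)*(2*ρ^2) := mul_le_mul hμm_le hμm_le hμm_pos.le (by positivity)
      _ = 4*ρ^4 := by ring
    have hupper : μm - ρ^2 ≤ 4*δ*ρ^4 := by
      have hstep : B*(1+ρ^2)*(μm - ρ^2) ≤ B*(1+ρ^2)*(4*δ*ρ^4) := by
        rw [key_eq, show B*(1+ρ^2)*(4*δ*ρ^4) = 4*ρ^4*(1+δ)*(1+ρ^2) by
          linear_combination 4*ρ^4*(1+ρ^2)*hBδ]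
        linarith [mul_le_mul_of_nonneg_left hμm2 h1ρ.le,
          mul_nonneg (mul_nonneg (mul_nonneg (by positivity : (0:ℝ) ≤ 4*ρ^4) hδ.le) h1ρ.le) (by norm_num : (0:ℝ) ≤ 1),
          mul_nonneg hB.le hρ4]
      exact (mul_le_mul_iff_right₀ hBρ).mp hstep
    have hlower : -(ρ^4) ≤ μm - ρ^2 := by
      have hstep : B*(1+ρ^2)*(-(ρ^4)) ≤ B*(1+ρ^2)*(μm - ρ^2) := by
        rw [key_eq]
        linarith [mul_nonneg h1ρ.le (sq_nonneg μm),
          mul_nonneg hB.le (by positivity : (0:ℝ) ≤ ρ^6)]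
      exact (mul_le_mul_iff_right₀ hBρ).mp hstep
    have h4δρ : (0:ℝ) ≤ 4*δ*ρ^4 := by positivity
    have habs : |μm - ρ^2| ≤ (1+4*δ)*ρ^4 := by
      rw [abs_le]
      constructor <;> linarith [hρ4, h4δρ, hupper, hlower]
    have e1 : |ls - ρ| ≤ |μm - ρ^2| / ρ := by
      have h := abs_sqrt_sub_sqrt hμm_pos.le (show (0:ℝ) < ρ^2 by positivity)
      rwa [Real.sqrt_sq hρpos.le, ← hls] at h
    calc |ls - ρ| ≤ |μm - ρ^2| / ρ := e1
      _ ≤ ((1+4*δ)*ρ^4)/ρ := (div_le_div_iff_of_pos_right hρpos).mpr habs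
      _ = (1+4*δ)*ρ^3 := by field_simp
  have hslow' : |ls - ρ| ≤ (2/Real.sqrt B + 2 + 4*δ) * ρ^3 := by
    refine hslow.trans (mul_le_mul_of_nonneg_right ?_ (by positivity))
    linarith
  refine ⟨lf, -lf, ls, -ls,
    ⟨ne_of_gt (by linarith), ne_of_gt hlslf, ne_of_gt (by linarith),
      ne_of_lt (by linarith), ne_of_lt (by linarith), ne_of_gt (by linarith)⟩,
    ?_, ?_, ?_, ?_, ?_⟩
  · intro l hl
    simp only [List.mem_cons, List.not_mem_nil, or_false] at hl
    rcases hl with rfl | rfl | rfl | rfl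
    · exact key μp lf hlf2 hrootδ_p
    · exact key μp (-lf) (by rw [neg_pow]; simp [hlf2]) hrootδ_p
    · exact key μm ls hls2 hrootδ_m
    · exact key μm (-ls) (by rw [neg_pow]; simp [hls2]) hrootδ_m
  · rw [hbinv]; exact efast'
  · rw [hbinv, show -lf + Real.sqrt B = -(lf - Real.sqrt B) by ring, abs_neg]
    exact efast'
  · exact hslow'
  · rw [show -ls + ρ = -(ls - ρ) by ring, abs_neg]
    exact hslow'
end

section
/- (Conservation of horizontal momentum.) Under the same hypotheses as for the free-surface shallow-water system with ε = 1 and α = ρ = √((1-γ)/(γ+δ)): if (ζ₁,ζ₂,u₁,u₂) is a C¹ solution with h₁ = 1+ρζ₁-ζ₂, h₂ = δ^{-1}+ζ₂, and p = (1/2)(γ((δ+γ)/(1-γ))(h₁+h₂)² + (γ+δ)h₂²), then ∂_t(γh₁u₁ + h₂u₂) + ∂_x p + ∂_x(γh₁u₁² + h₂u₂²) = 0 pointwise. -/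
/-- Conservation of horizontal momentum for the free-surface two-layer
shallow-water system (with `ε = 1`, `α = ρ = √((1-γ)/(γ+δ))`): any `C¹` solution
satisfies the pointwise identity
`∂ₜ(γh₁u₁ + h₂u₂) + ∂ₓp + ∂ₓ(γh₁u₁² + h₂u₂²) = 0`. -/
theorem free_surface_momentum_conservation (δ γ ρ : ℝ)
    (hδ : 0 < δ) (hγ₀ : 0 < γ) (hγ₁ : γ < 1)
    (hρ : ρ = Real.sqrt ((1 - γ) / (γ + δ)))
    (ζ₁ ζ₂ u₁ u₂ h₁ h₂ p : ℝ → ℝ → ℝ)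
    (hreg₁ : ContDiff ℝ 1 (Function.uncurry ζ₁))
    (hreg₂ : ContDiff ℝ 1 (Function.uncurry ζ₂))
    (hreg₃ : ContDiff ℝ 1 (Function.uncurry u₁))
    (hreg₄ : ContDiff ℝ 1 (Function.uncurry u₂))
    (hh₁ : ∀ t x, h₁ t x = 1 + ρ * ζ₁ t x - ζ₂ t x)
    (hh₂ : ∀ t x, h₂ t x = δ⁻¹ + ζ₂ t x)
    (hp : ∀ t x, p t x = 1 / 2 * (γ * ((δ + γ) / (1 - γ)) * (h₁ t x + h₂ t x) ^ 2
        + (γ + δ) * (h₂ t x) ^ 2))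
    (eq₁ : ∀ t x, ρ * deriv (fun τ => ζ₁ τ x) t
        + deriv (fun y => h₁ t y * u₁ t y) x + deriv (fun y => h₂ t y * u₂ t y) x = 0)
    (eq₂ : ∀ t x, deriv (fun τ => ζ₂ τ x) t + deriv (fun y => h₂ t y * u₂ t y) x = 0)
    (eq₃ : ∀ t x, deriv (fun τ => u₁ τ x) t
        + ρ * ((δ + γ) / (1 - γ)) * deriv (fun y => ζ₁ t y) x
        + 1 / 2 * deriv (fun y => (u₁ t y) ^ 2) x = 0)
    (eq₄ : ∀ t x, deriv (fun τ => u₂ τ x) t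
        + (δ + γ) * deriv (fun y => ζ₂ t y) x
        + γ * ρ * ((δ + γ) / (1 - γ)) * deriv (fun y => ζ₁ t y) x
        + 1 / 2 * deriv (fun y => (u₂ t y) ^ 2) x = 0) :
    ∀ t x, deriv (fun τ => γ * h₁ τ x * u₁ τ x + h₂ τ x * u₂ τ x) t
        + deriv (fun y => p t y) x
        + deriv (fun y => γ * h₁ t y * (u₁ t y) ^ 2 + h₂ t y * (u₂ t y) ^ 2) x = 0 := by
  have dT : ∀ (f : ℝ → ℝ → ℝ), ContDiff ℝ 1 (Function.uncurry f) →
      ∀ t x : ℝ, DifferentiableAt ℝ (fun τ => f τ x) t := fun f hf t x =>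
    by have h := ((hf.differentiable one_ne_zero) (t, x)).comp t ((differentiableAt_fun_id (𝕜 := ℝ) (x := t)).prodMk (differentiableAt_const x)); exact h
  have dX : ∀ (f : ℝ → ℝ → ℝ), ContDiff ℝ 1 (Function.uncurry f) →
      ∀ t x : ℝ, DifferentiableAt ℝ (fun y => f t y) x := fun f hf t x =>
    by have h := ((hf.differentiable one_ne_zero) (t, x)).comp x ((differentiableAt_const t).prodMk differentiableAt_id); exact h
  intro t x
  have hz1t := (dT ζ₁ hreg₁ t x).hasDerivAt
  have hz2t := (dT ζ₂ hreg₂ t x).hasDerivAt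
  have hu1t := (dT u₁ hreg₃ t x).hasDerivAt
  have hu2t := (dT u₂ hreg₄ t x).hasDerivAt
  have hz1x := (dX ζ₁ hreg₁ t x).hasDerivAt
  have hz2x := (dX ζ₂ hreg₂ t x).hasDerivAt
  have hu1x := (dX u₁ hreg₃ t x).hasDerivAt
  have hu2x := (dX u₂ hreg₄ t x).hasDerivAt
  set A := deriv (fun τ => ζ₁ τ x) t with hA
  set B := deriv (fun τ => ζ₂ τ x) t with hB
  set C := deriv (fun τ => u₁ τ x) t with hC
  set D := deriv (fun τ => u₂ τ x) t with hD
  set a := deriv (fun y => ζ₁ t y) x with ha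
  set b := deriv (fun y => ζ₂ t y) x with hb
  set c := deriv (fun y => u₁ t y) x with hc
  set d := deriv (fun y => u₂ t y) x with hd
  have E1 := eq₁ t x
  have E2 := eq₂ t x
  have E3 := eq₃ t x
  have E4 := eq₄ t x
  -- rewrite h₁, h₂, p inside function arguments
  have f1 : (fun y => h₁ t y * u₁ t y) = fun y => (1 + ρ * ζ₁ t y - ζ₂ t y) * u₁ t y :=
    funext fun y => by rw [hh₁]
  have f2 : (fun y => h₂ t y * u₂ t y) = fun y => (δ⁻¹ + ζ₂ t y) * u₂ t y :=
    funext fun y => by rw [hh₂]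
  have f3 : (fun τ => γ * h₁ τ x * u₁ τ x + h₂ τ x * u₂ τ x)
      = fun τ => γ * (1 + ρ * ζ₁ τ x - ζ₂ τ x) * u₁ τ x + (δ⁻¹ + ζ₂ τ x) * u₂ τ x :=
    funext fun τ => by rw [hh₁, hh₂]
  have f4 : (fun y => p t y)
      = fun y => 1 / 2 * (γ * ((δ + γ) / (1 - γ))
          * ((1 + ρ * ζ₁ t y - ζ₂ t y) + (δ⁻¹ + ζ₂ t y)) ^ 2
          + (γ + δ) * (δ⁻¹ + ζ₂ t y) ^ 2) :=
    funext fun y => by rw [hp, hh₁, hh₂]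
  have f5 : (fun y => γ * h₁ t y * (u₁ t y) ^ 2 + h₂ t y * (u₂ t y) ^ 2)
      = fun y => γ * (1 + ρ * ζ₁ t y - ζ₂ t y) * (u₁ t y) ^ 2 + (δ⁻¹ + ζ₂ t y) * (u₂ t y) ^ 2 :=
    funext fun y => by rw [hh₁, hh₂]
  rw [f1, f2] at E1
  rw [f2] at E2
  rw [f3, f4, f5]
  -- pieces
  have Hh1x : HasDerivAt (fun y => 1 + ρ * ζ₁ t y - ζ₂ t y) (ρ * a - b) x :=
    ((hz1x.const_mul ρ).const_add 1).sub hz2x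
  have Hh2x : HasDerivAt (fun y => δ⁻¹ + ζ₂ t y) b x := hz2x.const_add δ⁻¹
  have Hh1t : HasDerivAt (fun τ => 1 + ρ * ζ₁ τ x - ζ₂ τ x) (ρ * A - B) t :=
    ((hz1t.const_mul ρ).const_add 1).sub hz2t
  have Hh2t : HasDerivAt (fun τ => δ⁻¹ + ζ₂ τ x) B t := hz2t.const_add δ⁻¹
  have Du1sq : HasDerivAt (fun y => (u₁ t y) ^ 2) (2 * u₁ t x * c) x := by
    simpa using hu1x.fun_pow 2
  have Du2sq : HasDerivAt (fun y => (u₂ t y) ^ 2) (2 * u₂ t x * d) x := by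
    simpa using hu2x.fun_pow 2
  have D1 : HasDerivAt (fun y => (1 + ρ * ζ₁ t y - ζ₂ t y) * u₁ t y)
      ((ρ * a - b) * u₁ t x + (1 + ρ * ζ₁ t x - ζ₂ t x) * c) x := Hh1x.mul hu1x
  have D2 : HasDerivAt (fun y => (δ⁻¹ + ζ₂ t y) * u₂ t y)
      (b * u₂ t x + (δ⁻¹ + ζ₂ t x) * d) x := Hh2x.mul hu2x
  have Dtime : HasDerivAt (fun τ => γ * (1 + ρ * ζ₁ τ x - ζ₂ τ x) * u₁ τ x
        + (δ⁻¹ + ζ₂ τ x) * u₂ τ x)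
      ((γ * (ρ * A - B) * u₁ t x + γ * (1 + ρ * ζ₁ t x - ζ₂ t x) * C)
        + (B * u₂ t x + (δ⁻¹ + ζ₂ t x) * D)) t :=
    ((Hh1t.const_mul γ).mul hu1t).add (Hh2t.mul hu2t)
  have Hsum : HasDerivAt (fun y => (1 + ρ * ζ₁ t y - ζ₂ t y) + (δ⁻¹ + ζ₂ t y))
      ((ρ * a - b) + b) x := Hh1x.add Hh2x
  have Dp : HasDerivAt (fun y => 1 / 2 * (γ * ((δ + γ) / (1 - γ))
        * ((1 + ρ * ζ₁ t y - ζ₂ t y) + (δ⁻¹ + ζ₂ t y)) ^ 2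
        + (γ + δ) * (δ⁻¹ + ζ₂ t y) ^ 2))
      (1 / 2 * (γ * ((δ + γ) / (1 - γ))
        * ((2 : ℕ) * ((1 + ρ * ζ₁ t x - ζ₂ t x) + (δ⁻¹ + ζ₂ t x)) ^ 1 * ((ρ * a - b) + b))
        + (γ + δ) * ((2 : ℕ) * (δ⁻¹ + ζ₂ t x) ^ 1 * b))) x :=
    (((Hsum.fun_pow 2).const_mul (γ * ((δ + γ) / (1 - γ)))).add
      ((Hh2x.fun_pow 2).const_mul (γ + δ))).const_mul (1 / 2)
  have Dflux : HasDerivAt (fun y => γ * (1 + ρ * ζ₁ t y - ζ₂ t y) * (u₁ t y) ^ 2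
        + (δ⁻¹ + ζ₂ t y) * (u₂ t y) ^ 2)
      ((γ * (ρ * a - b) * (u₁ t x) ^ 2 + γ * (1 + ρ * ζ₁ t x - ζ₂ t x) * (2 * u₁ t x * c))
        + (b * (u₂ t x) ^ 2 + (δ⁻¹ + ζ₂ t x) * (2 * u₂ t x * d))) x :=
    ((Hh1x.const_mul γ).mul Du1sq).add (Hh2x.mul Du2sq)
  rw [Dtime.deriv, Dp.deriv, Dflux.deriv]
  rw [D1.deriv, D2.deriv] at E1
  rw [D2.deriv] at E2
  rw [Du1sq.deriv] at E3
  rw [Du2sq.deriv] at E4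
  push_cast
  linear_combination (γ * u₁ t x) * E1 + (u₂ t x - γ * u₁ t x) * E2
    + (γ * (1 + ρ * ζ₁ t x - ζ₂ t x)) * E3 + (δ⁻¹ + ζ₂ t x) * E4
end
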